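/- For any cohomology class u on X, swgt(u^n) ≥ n · swgt(u) for every natural number n. -/

import Mathlib

open Topology unitInterval

def NullhomotopicOn {A X : Type*} [TopologicalSpace A] [TopologicalSpace X]
    (φ : C(A, X)) (s : Set A) : Prop :=
  ∃ x : X, (φ.restrict s).Homotopic (ContinuousMap.const s x)

noncomputable def catMap {A X : Type*} [TopologicalSpace A] [TopologicalSpace X]
    (φ : C(A, X)) : ℕ∞ :=
  sInf {k : ℕ∞ | ∃ n : ℕ, k = n ∧ ∃ U : Fin (n + 1) → Set A,
    (∀ i, IsOpen (U i)) ∧ (⋃ i, U i) = Set.univ ∧ ∀ i, NullhomotopicOn φ (U i)}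

noncomputable def catSpace (X : Type*) [TopologicalSpace X] : ℕ∞ :=
  catMap (ContinuousMap.id X)

/-- The wedge of circles indexed by `ι`: the quotient of `ι × Circle` identifying
all points `(i, 1)`. -/
def wedgeSetoid (ι : Type) : Setoid (ι × Circle) where
  r p q := p = q ∨ (p.2 = 1 ∧ q.2 = 1)
  iseqv := ⟨fun _ => Or.inl rfl,
    by rintro p q (rfl | h); exacts [Or.inl rfl, Or.inr ⟨h.2, h.1⟩],
    by rintro p q r (rfl | h) h2
       · exact h2
       · rcases h2 with rfl | h'
         · exact Or.inr h
         · exact Or.inr ⟨h.1, h'.2⟩⟩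

def WedgeCircles (ι : Type) : Type := Quotient (wedgeSetoid ι)

noncomputable instance (ι : Type) : TopologicalSpace (WedgeCircles ι) :=
  letI : TopologicalSpace ι := ⊥
  instTopologicalSpaceQuotient

/-- An (abstract) cohomology theory in degrees `n : ℕ` with coefficients `G`, modelling
Alexander–Spanier cohomology: contravariantly functorial, homotopy invariant, with a
distinguished zero class, and vanishing above degree 1 on wedges of circles. -/
structure CohomologyTheory (G : Type) : Type 1 where
  H : ℕ → TopCat.{0} → Type
  zero : ∀ n X, H n X
  pull : ∀ {n : ℕ} {X Y : TopCat.{0}}, C(X, Y) → H n Y → H n X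
  pull_id : ∀ {n : ℕ} {X : TopCat.{0}} (u : H n X), pull (ContinuousMap.id X) u = u
  pull_comp : ∀ {n : ℕ} {X Y Z : TopCat.{0}} (f : C(X, Y)) (g : C(Y, Z)) (u : H n Z),
    pull (g.comp f) u = pull f (pull g u)
  pull_zero : ∀ {n : ℕ} {X Y : TopCat.{0}} (f : C(X, Y)), pull f (zero n Y) = zero n X
  homotopy_inv : ∀ {n : ℕ} {X Y : TopCat.{0}} (f g : C(X, Y)), f.Homotopic g →
    ∀ u : H n Y, pull f u = pull g u
  wedge_acyclic : ∀ (ι : Type) (n : ℕ), 1 < n →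
    ∀ u : H n (TopCat.of (WedgeCircles ι)), u = zero n (TopCat.of (WedgeCircles ι))

/-- Strict category weight of a cohomology class. -/
noncomputable def swgt {G : Type} (T : CohomologyTheory G) {n : ℕ} {X : TopCat.{0}}
    (u : T.H n X) : ℕ∞ :=
  sSup {k : ℕ∞ | ∀ (A : TopCat.{0}), T2Space A → ParacompactSpace A →
    ∀ φ : C(A, X), catMap φ < k → T.pull φ u = T.zero n A}

/-- An abstract cohomology theory with cup products (coefficients in a ring `R`),
natural and satisfying the relative-vanishing property for open covers. -/
structure RingCohomologyTheory (R : Type) extends CohomologyTheory R where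
  cup : ∀ {m n : ℕ} {X : TopCat.{0}}, H m X → H n X → H (m + n) X
  cup_pull : ∀ {m n : ℕ} {X Y : TopCat.{0}} (f : C(X, Y)) (u : H m Y) (v : H n Y),
    pull f (cup u v) = cup (pull f u) (pull f v)
  cup_vanish : ∀ {m n : ℕ} {X : TopCat.{0}} (B C : Set X), IsOpen B → IsOpen C →
    B ∪ C = Set.univ → ∀ (u : H m X) (v : H n X),
    pull (⟨Subtype.val, continuous_subtype_val⟩ : C(TopCat.of B, X)) u = zero m (TopCat.of B) →
    pull (⟨Subtype.val, continuous_subtype_val⟩ : C(TopCat.of C, X)) v = zero n (TopCat.of C) →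
    cup u v = zero (m + n) X

/-- Degree cast. -/
def CohomologyTheory.castDeg {G : Type} (T : CohomologyTheory G) {m n : ℕ} {X : TopCat.{0}}
    (h : m = n) (u : T.H m X) : T.H n X := h ▸ u

/-- `T.cupPow u n` is the `(n+1)`-st cup power `u^{n+1}`. -/
noncomputable def RingCohomologyTheory.cupPow {R : Type} (T : RingCohomologyTheory R)
    {q : ℕ} {X : TopCat.{0}} (u : T.H q X) : (n : ℕ) → T.H (q * (n + 1)) X
  | 0 => T.toCohomologyTheory.castDeg (mul_one q).symm u
  | n + 1 => T.toCohomologyTheory.castDeg (by ring)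
      (T.cup u (T.cupPow u n))


section Aux

open Set


theorem paracompact_cozero_aux {X : Type} [TopologicalSpace X] [ParacompactSpace X]
    {f : X → ℝ} (hf : Continuous f) (hf1 : ∀ x, f x ≤ 1) :
    ParacompactSpace {x | 0 < f x} := by
  constructor
  intro α s ho hu
  have hSopen : IsOpen {x | 0 < f x} := isOpen_lt continuous_const hf
  have hso : ∀ a, IsOpen (Subtype.val '' s a) := fun a =>
    hSopen.isOpenMap_subtype_val _ (ho a)
  have hsp : ∀ a, (Subtype.val ⁻¹' (Subtype.val '' s a) : Set {x | 0 < f x}) = s a := fun a =>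
    Set.preimage_image_eq _ Subtype.val_injective
  have key : ∀ n : ℕ, ∃ v : α ⊕ Unit → Set X, (∀ i, IsOpen (v i)) ∧ (⋃ i, v i) = univ ∧
      LocallyFinite v ∧ (∀ a, v (Sum.inl a) ⊆ Subtype.val '' s a) ∧
      v (Sum.inr ()) ⊆ {x | f x < 1/((n:ℝ)+2)} ∪ {x | 1/((n:ℝ)+1) < f x} := by
    intro n
    set c : α ⊕ Unit → Set X := Sum.elim (fun a => Subtype.val '' s a)
      (fun _ => {x | f x < 1/((n:ℝ)+2)} ∪ {x | 1/((n:ℝ)+1) < f x}) with hc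
    have hco : ∀ i, IsOpen (c i) := by
      rintro (a | _)
      · exact hso a
      · exact (isOpen_lt hf continuous_const).union (isOpen_lt continuous_const hf)
    have hcu : ⋃ i, c i = univ := by
      apply eq_univ_of_forall
      intro x
      rcases lt_or_ge (f x) (1/((n:ℝ)+2)) with h | h
      · exact mem_iUnion.2 ⟨Sum.inr (), Or.inl h⟩
      rcases lt_or_ge (1/((n:ℝ)+1)) (f x) with h' | h'
      · exact mem_iUnion.2 ⟨Sum.inr (), Or.inr h'⟩
      have hxS : x ∈ {x | 0 < f x} := by
        have hpos : (0:ℝ) < 1/((n:ℝ)+2) := by positivity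
        exact lt_of_lt_of_le hpos h
      have := hu ▸ mem_univ (⟨x, hxS⟩ : {x | 0 < f x})
      rcases mem_iUnion.1 this with ⟨a, ha⟩
      exact mem_iUnion.2 ⟨Sum.inl a, ⟨⟨x, hxS⟩, ha, rfl⟩⟩
    rcases precise_refinement c hco hcu with ⟨v, hvo, hvu, hvf, hvc⟩
    exact ⟨v, hvo, hvu, hvf, fun a => hvc (Sum.inl a), hvc (Sum.inr ())⟩
  choose v hvo hvu hvf hvl hvr using key
  set t : ℕ × α → Set {x | 0 < f x} := fun p =>
    Subtype.val ⁻¹' (v p.1 (Sum.inl p.2) ∩ {x | f x < 2/((p.1:ℝ)+1)}) with ht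
  refine ⟨ℕ × α, t, ?_, ?_, ?_, ?_⟩
  · intro p
    exact ((hvo p.1 _).inter (isOpen_lt hf continuous_const)).preimage continuous_subtype_val
  · -- covers
    apply eq_univ_of_forall
    intro x
    have hx0 : 0 < f x.val := x.2
    have hex : ∃ n : ℕ, 1/((n:ℝ)+2) ≤ f x.val := by
      obtain ⟨n, hn⟩ := exists_nat_one_div_lt hx0
      refine ⟨n, le_of_lt (lt_of_le_of_lt ?_ hn)⟩
      apply one_div_le_one_div_of_le <;> push_cast <;> linarith
    classical
    set n₀ := Nat.find hex with hn₀
    have hlow : 1/((n₀:ℝ)+2) ≤ f x.val := Nat.find_spec hex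
    have hhigh : f x.val ≤ 1/((n₀:ℝ)+1) := by
      rcases Nat.eq_zero_or_pos n₀ with h0 | h0
      · rw [h0]; simpa using hf1 x.val
      · have := Nat.find_min hex (m := n₀ - 1) (by omega)
        push_neg at this
        have : f x.val < 1/(((n₀-1:ℕ):ℝ)+2) := this
        have hcast : (((n₀-1:ℕ):ℝ)+2) = ((n₀:ℝ)+1) := by
          have : (1:ℕ) ≤ n₀ := h0
          push_cast [Nat.cast_sub this]
          ring
        rw [hcast] at this
        exact le_of_lt this
    have hxv : (x : X) ∈ ⋃ i, v n₀ i := (hvu n₀).symm ▸ mem_univ _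
    rcases mem_iUnion.1 hxv with ⟨i, hi⟩
    rcases i with a | u
    · refine mem_iUnion.2 ⟨(n₀, a), ?_⟩
      refine ⟨hi, ?_⟩
      have h12 : (1:ℝ)/((n₀:ℝ)+1) < 2/((n₀:ℝ)+1) := by
        have hp : (0:ℝ) < (n₀:ℝ)+1 := by positivity
        rw [div_lt_div_iff₀ hp hp]
        linarith
      exact lt_of_le_of_lt hhigh h12
    · exfalso
      rcases hvr n₀ hi with h | h
      · exact absurd hlow (not_le.2 h)
      · exact absurd hhigh (not_le.2 h)
  · -- locally finite
    intro x
    have hx0 : 0 < f x.val := x.2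
    obtain ⟨N, hN⟩ := exists_nat_one_div_lt (half_pos hx0)
    have hN2 : 2/((N:ℝ)+1) < f x.val := by
      rw [div_lt_iff₀ (by positivity)] at hN ⊢
      linarith
    choose nb hnb hfin using fun n => hvf n (x.val : X)
    set V : Set {x | 0 < f x} :=
      Subtype.val ⁻¹' ({y | 2/((N:ℝ)+1) < f y} ∩ ⋂ n ∈ Finset.range (N+1), nb n) with hV
    refine ⟨V, ?_, ?_⟩
    · apply ContinuousAt.preimage_mem_nhds continuous_subtype_val.continuousAt
      apply Filter.inter_mem
      · exact (isOpen_lt continuous_const hf).mem_nhds hN2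
      · exact (Filter.biInter_finset_mem _).2 fun n _ => hnb n
    · -- finiteness
      have hsub : {p : ℕ × α | (t p ∩ V).Nonempty}
          ⊆ ⋃ n ∈ Finset.range (N+1),
            (fun a => (n, a)) '' (Sum.inl ⁻¹' {i | (v n i ∩ nb n).Nonempty}) := by
        rintro ⟨n, a⟩ ⟨y, ⟨hyv, hyR⟩, hyV, hyI⟩
        have hnN : n < N + 1 := by
          have h1 : 2/((N:ℝ)+1) < 2/((n:ℝ)+1) := lt_trans hyV hyR
          have h2 : (n:ℝ)+1 < (N:ℝ)+1 := by
            rw [div_lt_div_iff₀ (by positivity) (by positivity)] at h1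
            linarith
          exact_mod_cast by exact_mod_cast (by push_cast at h2 ⊢; linarith : ((n:ℝ)) < (N:ℝ)+1)
        have hyn : (y : X) ∈ nb n := by
          have := mem_iInter₂.1 hyI n (Finset.mem_range.2 hnN)
          exact this
        exact mem_biUnion (Finset.mem_range.2 hnN) ⟨a, ⟨y, hyv, hyn⟩, rfl⟩
      refine Set.Finite.subset ?_ hsub
      apply Set.Finite.biUnion (Finset.finite_toSet _)
      intro n _
      exact ((hfin n).preimage Sum.inl_injective.injOn).image _
  · rintro ⟨n, a⟩
    refine ⟨a, ?_⟩
    intro y hy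
    have : (y:X) ∈ Subtype.val '' s a := hvl n a hy.1
    rw [← hsp a]
    exact this

theorem paracompact_cozero {X : Type} [TopologicalSpace X] [ParacompactSpace X]
    {f : X → ℝ} (hf : Continuous f) : ParacompactSpace {x | 0 < f x} := by
  have hS : {x | 0 < f x} = {x | 0 < min (f x) 1} := by
    ext x; simp [lt_min_iff]
  rw [hS]
  exact paracompact_cozero_aux (hf.min continuous_const) (fun x => min_le_right _ _)
theorem nullhomotopicOn_comp {A B X : Type*} [TopologicalSpace A] [TopologicalSpace B]
    [TopologicalSpace X] (φ : C(A, X)) (g : C(B, A)) {s : Set A}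
    (h : NullhomotopicOn φ s) : NullhomotopicOn (φ.comp g) (g ⁻¹' s) := by
  obtain ⟨x, hx⟩ := h
  refine ⟨x, ?_⟩
  let j : C((g ⁻¹' s : Set B), (s : Set A)) :=
    ⟨fun y => ⟨g y, y.2⟩, (g.continuous.comp continuous_subtype_val).subtype_mk _⟩
  have h1 : (φ.comp g).restrict (g ⁻¹' s) = (φ.restrict s).comp j :=
    ContinuousMap.ext fun y => rfl
  have h2 : (ContinuousMap.const (s : Set A) x).comp j
      = ContinuousMap.const (g ⁻¹' s : Set B) x := ContinuousMap.ext fun y => rfl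
  rw [h1, ← h2]
  exact hx.comp (ContinuousMap.Homotopic.refl j)

theorem catMap_le {A X : Type*} [TopologicalSpace A] [TopologicalSpace X] (φ : C(A, X)) (n : ℕ)
    (U : Fin (n + 1) → Set A) (hUo : ∀ i, IsOpen (U i)) (hUu : ⋃ i, U i = Set.univ)
    (hUn : ∀ i, NullhomotopicOn φ (U i)) : catMap φ ≤ n :=
  sInf_le ⟨n, rfl, U, hUo, hUu, hUn⟩

theorem catMap_comp_le {A B X : Type*} [TopologicalSpace A] [TopologicalSpace B]
    [TopologicalSpace X] (φ : C(A, X)) (g : C(B, A)) :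
    catMap (φ.comp g) ≤ catMap φ := by
  apply sInf_le_sInf
  rintro k ⟨n, rfl, U, hUo, hUu, hUn⟩
  exact ⟨n, rfl, fun i => g ⁻¹' U i, fun i => (hUo i).preimage g.continuous,
    by rw [← Set.preimage_iUnion, hUu, Set.preimage_univ],
    fun i => nullhomotopicOn_comp φ g (hUn i)⟩

theorem pull_castDeg {G : Type} (T : CohomologyTheory G) {m n : ℕ} {X Y : TopCat.{0}}
    (h : m = n) (f : C(X, Y)) (u : T.H m Y) :
    T.pull f (T.castDeg h u) = T.castDeg h (T.pull f u) := by
  subst h; rfl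

theorem castDeg_zero {G : Type} (T : CohomologyTheory G) {m n : ℕ} {X : TopCat.{0}}
    (h : m = n) : T.castDeg h (T.zero m X) = T.zero n X := by
  subst h; rfl

theorem main_vanish {R : Type} (T : RingCohomologyTheory R) {X : TopCat.{0}} {q : ℕ}
    (u : T.H q X) :
    ∀ m : ℕ, ∀ (A : TopCat.{0}), T2Space A → ParacompactSpace A →
      ∀ φ : C(A, X), catMap φ < ((m : ℕ∞) + 1) * swgt T.toCohomologyTheory u →
      T.pull φ (T.cupPow u m) = T.zero (q * (m + 1)) A := by
  have hvan : ∀ (A : TopCat.{0}), T2Space A → ParacompactSpace A →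
      ∀ φ : C(A, X), catMap φ < swgt T.toCohomologyTheory u →
      T.pull φ u = T.zero q A := by
    intro A hT2 hPara φ hφ
    rw [swgt, lt_sSup_iff] at hφ
    obtain ⟨k, hk, hlt⟩ := hφ
    exact hk A hT2 hPara φ hlt
  intro m
  induction m with
  | zero =>
    intro A hT2 hPara φ hφ
    have hlt : catMap φ < swgt T.toCohomologyTheory u := by simpa using hφ
    have h1 : T.cupPow u 0 = T.toCohomologyTheory.castDeg (mul_one q).symm u := rfl
    rw [h1, pull_castDeg, hvan A hT2 hPara φ hlt, castDeg_zero]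
  | succ m ih =>
    intro A hT2 hPara φ hφ
    haveI := hT2; haveI := hPara
    set w := swgt T.toCohomologyTheory u with hw
    have hw0 : w ≠ 0 := by
      rintro h0
      rw [h0, mul_zero] at hφ
      simp at hφ
    have hunfold : T.cupPow u (m + 1)
        = T.toCohomologyTheory.castDeg (by ring) (T.cup u (T.cupPow u m)) := rfl
    rw [hunfold, pull_castDeg, T.cup_pull]
    have hmain : T.cup (T.pull φ u) (T.pull φ (T.cupPow u m))
        = T.zero (q + q * (m + 1)) A := by
      rcases lt_or_ge (catMap φ) w with hlt | hge
      · -- easy case: restrict to the whole space twice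
        haveI : ParacompactSpace (Set.univ : Set A) :=
          (Homeomorph.Set.univ (A : Type)).paracompactSpace_iff.2 hPara
        set ι : C(TopCat.of (Set.univ : Set A), A) :=
          ⟨Subtype.val, continuous_subtype_val⟩ with hι
        have hcat : catMap (φ.comp ι) ≤ catMap φ := catMap_comp_le φ ι
        have h1 : T.pull ι (T.pull φ u) = T.zero q (TopCat.of (Set.univ : Set A)) := by
          rw [← T.pull_comp]
          exact hvan _ (inferInstanceAs (T2Space (Set.univ : Set A)))
            (inferInstanceAs (ParacompactSpace (Set.univ : Set A))) _
            (lt_of_le_of_lt hcat hlt)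
        have h2 : T.pull ι (T.pull φ (T.cupPow u m))
            = T.zero (q * (m + 1)) (TopCat.of (Set.univ : Set A)) := by
          rw [← T.pull_comp]
          refine ih _ (inferInstanceAs (T2Space (Set.univ : Set A)))
            (inferInstanceAs (ParacompactSpace (Set.univ : Set A))) _
            (lt_of_le_of_lt hcat (lt_of_lt_of_le hlt ?_))
          calc w = 1 * w := (one_mul w).symm
            _ ≤ ((m : ℕ∞) + 1) * w := mul_le_mul_left le_add_self w
        exact T.cup_vanish Set.univ Set.univ isOpen_univ isOpen_univ
          (Set.univ_union _) _ _ h1 h2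
      · -- main case: split a cover
        have hwt : w ≠ ⊤ := by
          intro htop
          rw [htop] at hge
          rw [top_le_iff.1 hge] at hφ
          exact absurd hφ (by simp)
        obtain ⟨a, ha⟩ : ∃ a : ℕ, w = (a : ℕ∞) := ⟨w.toNat, (ENat.coe_toNat hwt).symm⟩
        have ha0 : 0 < a := by
          rcases Nat.eq_zero_or_pos a with h0 | h0
          · exact absurd (by rw [ha, h0]; rfl) hw0
          · exact h0
        have hφ' : catMap φ < (((m + 2) * a : ℕ) : ℕ∞) := by
          refine lt_of_lt_of_le hφ (le_of_eq ?_)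
          rw [ha]
          push_cast
          ring
        rw [catMap, sInf_lt_iff] at hφ'
        obtain ⟨k, ⟨n, rfl, U, hUo, hUu, hUn⟩, hklt⟩ := hφ'
        have hn : n < (m + 2) * a := by exact_mod_cast hklt
        have hna : a ≤ n := by
          have h1 : catMap φ ≤ (n : ℕ∞) := catMap_le φ n U hUo hUu hUn
          have h2 : (a : ℕ∞) ≤ (n : ℕ∞) := le_trans (ha ▸ hge) h1
          exact_mod_cast h2
        -- partition of unity
        obtain ⟨pou, hpou⟩ := PartitionOfUnity.exists_isSubordinate
          (s := (Set.univ : Set A)) isClosed_univ U hUo (by rw [hUu])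
        classical
        set g : A → ℝ := fun x =>
          ∑ i ∈ Finset.univ.filter (fun i : Fin (n + 1) => i.val < a), pou i x with hgdef
        set gh : A → ℝ := fun x =>
          ∑ i ∈ Finset.univ.filter (fun i : Fin (n + 1) => ¬ i.val < a), pou i x with hghdef
        have hg : Continuous g := continuous_finset_sum _ fun i _ => (pou i).continuous
        have hgh : Continuous gh := continuous_finset_sum _ fun i _ => (pou i).continuous
        have hsum : ∀ x, g x + gh x = 1 := by
          intro x
          rw [hgdef, hghdef]
          simp only
          rw [Finset.sum_filter_add_sum_filter_not]
          rw [← finsum_eq_sum_of_fintype]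
          exact pou.sum_eq_one (Set.mem_univ x)
        have hgnn : ∀ x, 0 ≤ g x := fun x =>
          Finset.sum_nonneg fun i _ => pou.nonneg i x
        have hghnn : ∀ x, 0 ≤ gh x := fun x =>
          Finset.sum_nonneg fun i _ => pou.nonneg i x
        set B : Set A := {x | 0 < g x} with hB
        set C : Set A := {x | 0 < gh x} with hC
        have hBo : IsOpen B := isOpen_lt continuous_const hg
        have hCo : IsOpen C := isOpen_lt continuous_const hgh
        have hBC : B ∪ C = Set.univ := by
          apply Set.eq_univ_of_forall
          intro x
          rcases lt_or_ge 0 (g x) with h | h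
          · exact Or.inl h
          · refine Or.inr ?_
            have := hsum x
            show (0 : ℝ) < gh x
            linarith
        have hBsub : ∀ x ∈ B, ∃ i : Fin (n + 1), i.val < a ∧ x ∈ U i := by
          intro x hx
          by_contra hcon
          push_neg at hcon
          have hzero : g x = 0 := by
            rw [hgdef]
            refine Finset.sum_eq_zero ?_
            intro i hi
            rw [Finset.mem_filter] at hi
            have hxU : x ∉ U i := fun hmem => absurd hmem (hcon i hi.2)
            by_contra hne
            exact hxU (hpou i (subset_tsupport _ hne))
          have hx' : (0:ℝ) < g x := hx
          rw [hzero] at hx'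
          exact lt_irrefl 0 hx'
        have hCsub : ∀ x ∈ C, ∃ i : Fin (n + 1), a ≤ i.val ∧ x ∈ U i := by
          intro x hx
          by_contra hcon
          push_neg at hcon
          have hzero : gh x = 0 := by
            rw [hghdef]
            refine Finset.sum_eq_zero ?_
            intro i hi
            rw [Finset.mem_filter] at hi
            have hxU : x ∉ U i := fun hmem => absurd hmem (hcon i (not_lt.1 hi.2))
            by_contra hne
            exact hxU (hpou i (subset_tsupport _ hne))
          have hx' : (0:ℝ) < gh x := hx
          rw [hzero] at hx'
          exact lt_irrefl 0 hx'
        haveI hBp : ParacompactSpace B := paracompact_cozero hg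
        haveI hCp : ParacompactSpace C := paracompact_cozero hgh
        set ιB : C(TopCat.of B, A) := ⟨Subtype.val, continuous_subtype_val⟩ with hιB
        set ιC : C(TopCat.of C, A) := ⟨Subtype.val, continuous_subtype_val⟩ with hιC
        -- category bound on B
        have hcatB : catMap (φ.comp ιB) ≤ ((a - 1 : ℕ) : ℕ∞) := by
          refine catMap_le _ (a - 1)
            (fun j => ιB ⁻¹' U ⟨j.val, by omega⟩) (fun j => ?_) ?_ (fun j => ?_)
          · exact (hUo _).preimage continuous_subtype_val
          · apply Set.eq_univ_of_forall
            intro x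
            obtain ⟨i, hia, hxU⟩ := hBsub x.val x.2
            have hj : i.val < (a - 1) + 1 := by omega
            refine Set.mem_iUnion.2 ⟨⟨i.val, hj⟩, ?_⟩
            show x.val ∈ U ⟨i.val, _⟩
            have : (⟨i.val, by omega⟩ : Fin (n + 1)) = i := Fin.ext rfl
            rw [this]
            exact hxU
          · exact nullhomotopicOn_comp φ ιB (hUn _)
        have hcatC : catMap (φ.comp ιC) ≤ ((n - a : ℕ) : ℕ∞) := by
          refine catMap_le _ (n - a)
            (fun j => ιC ⁻¹' U ⟨a + j.val, by omega⟩) (fun j => ?_) ?_ (fun j => ?_)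
          · exact (hUo _).preimage continuous_subtype_val
          · apply Set.eq_univ_of_forall
            intro x
            obtain ⟨i, hia, hxU⟩ := hCsub x.val x.2
            have hi1 : i.val < n + 1 := i.isLt
            have hj : i.val - a < (n - a) + 1 := by omega
            refine Set.mem_iUnion.2 ⟨⟨i.val - a, hj⟩, ?_⟩
            show x.val ∈ U ⟨a + (i.val - a), _⟩
            have : (⟨a + (i.val - a), by omega⟩ : Fin (n + 1)) = i := Fin.ext (by simp; omega)
            rw [this]
            exact hxU
          · exact nullhomotopicOn_comp φ ιC (hUn _)
        have h1 : T.pull ιB (T.pull φ u) = T.zero q (TopCat.of B) := by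
          rw [← T.pull_comp]
          refine hvan _ (inferInstanceAs (T2Space B)) hBp _ (lt_of_le_of_lt hcatB ?_)
          rw [ha]
          exact_mod_cast (by omega : a - 1 < a)
        have h2 : T.pull ιC (T.pull φ (T.cupPow u m))
            = T.zero (q * (m + 1)) (TopCat.of C) := by
          rw [← T.pull_comp]
          refine ih _ (inferInstanceAs (T2Space C)) hCp _ (lt_of_le_of_lt hcatC ?_)
          have hnat : n - a < (m + 1) * a := by
            have h2' : n < (m + 1) * a + a := by
              rw [show (m + 1) * a + a = (m + 2) * a by ring]
              exact hn
            omega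
          calc ((n - a : ℕ) : ℕ∞) < (((m + 1) * a : ℕ) : ℕ∞) := by exact_mod_cast hnat
            _ = ((m : ℕ∞) + 1) * w := by rw [ha]; push_cast; ring
        exact T.cup_vanish B C hBo hCo hBC _ _ h1 h2
    rw [hmain, castDeg_zero]

end Aux

/-- `swgt (u^n) ≥ n · swgt u` for all `n ≥ 1` (here `T.cupPow u m` is the `(m+1)`-st
cup power of `u`). -/
theorem swgt_cupPow_ge {R : Type} [CommRing R] (T : RingCohomologyTheory R) (X : TopCat.{0})
    [T2Space X] [ParacompactSpace X]
    {q : ℕ} (u : T.H q X) (m : ℕ) :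
    ((m : ℕ∞) + 1) * swgt T.toCohomologyTheory u ≤
      swgt T.toCohomologyTheory (T.cupPow u m) := by
  apply le_sSup
  intro A hT2 hPara φ hφ
  exact main_vanish T u m A hT2 hPara φ hφ
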